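/- arXiv:2009.00184 — 2 statements merged into one kernel-verified Lean document; each statement's English description precedes it below -/
import Mathlib

section
/- Let λ, Λ > 0, set α = λ/(λ+Λ), and let 0 < x̄ < 1. Define r = (λ/Λ + e^{1-x̄})^{-1}, q = r(λ/Λ - e^{1-x̄}(e^{α x̄} - 1)), and p(x) = α r e^{1-x̄+α x̄} e^{-α x} for 0 < x ≤ x̄ and p(x) = r e^{1-x} for x̄ < x < 1. Then the total mass condition q + r + ∫_0^1 p(x) dx = 1 holds. -/
open Real Set

lemma integral_exp_const_mul (c a b : ℝ) (hc : c ≠ 0) :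
    ∫ x in a..b, Real.exp (c * x) = (Real.exp (c * b) - Real.exp (c * a)) / c := by
  have := intervalIntegral.integral_comp_mul_left (fun x => Real.exp x) hc (a := a) (b := b)
  rw [integral_exp] at this
  rw [this, smul_eq_mul]
  field_simp

theorem mass_conservation (lam Lam xb : ℝ) (hlam : 0 < lam) (hLam : 0 < Lam)
    (hxb : xb ∈ Ioo (0:ℝ) 1)
    (α r q : ℝ) (p : ℝ → ℝ)
    (hα : α = lam / (lam + Lam))
    (hr : r = (lam / Lam + exp (1 - xb))⁻¹)
    (hq : q = r * (lam / Lam - exp (1 - xb) * (exp (α * xb) - 1)))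
    (hp : ∀ x, p x = if x ≤ xb then α * r * exp (1 - xb + α * xb) * exp (-α * x)
        else r * exp (1 - x)) :
    q + r + ∫ x in (0:ℝ)..1, p x = 1 := by
  obtain ⟨hxb0, hxb1⟩ := hxb
  have hαpos : 0 < α := by
    rw [hα]; positivity
  have hαne : α ≠ 0 := ne_of_gt hαpos
  -- first piece
  have h1 : ∫ x in (0:ℝ)..xb, p x
      = α * r * exp (1 - xb + α * xb) * ((exp (-α * xb) - exp (-α * 0)) / (-α)) := by
    rw [← integral_exp_const_mul (-α) 0 xb (by simpa using hαne), ← intervalIntegral.integral_const_mul]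
    apply intervalIntegral.integral_congr
    intro x hx
    rw [uIcc_of_le hxb0.le] at hx
    rw [hp x, if_pos hx.2]
  have h2 : ∫ x in xb..(1:ℝ), p x
      = r * exp 1 * ((exp (-1 * 1) - exp (-1 * xb)) / (-1)) := by
    rw [← integral_exp_const_mul (-1) xb 1 (by norm_num), ← intervalIntegral.integral_const_mul]
    rw [intervalIntegral.integral_of_le hxb1.le, intervalIntegral.integral_of_le hxb1.le]
    apply MeasureTheory.setIntegral_congr_fun measurableSet_Ioc
    intro x hx
    rw [hp x, if_neg (not_le.mpr hx.1)]
    rw [show (1:ℝ) - x = 1 + (-1 * x) by ring, Real.exp_add]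
    ring
  have hI1 : IntervalIntegrable p MeasureTheory.volume 0 xb := by
    apply IntervalIntegrable.congr_ae
      (f := fun x => α * r * exp (1 - xb + α * xb) * exp (-α * x))
    · exact (Continuous.intervalIntegrable (by continuity) _ _)
    · filter_upwards [MeasureTheory.ae_restrict_mem measurableSet_uIoc] with x hx
      rw [uIoc_of_le hxb0.le] at hx
      simp only [hp x, if_pos hx.2]
  have hI2 : IntervalIntegrable p MeasureTheory.volume xb 1 := by
    apply IntervalIntegrable.congr_ae (f := fun x => r * exp (1 - x))
    · exact (Continuous.intervalIntegrable (by continuity) _ _)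
    · filter_upwards [MeasureTheory.ae_restrict_mem measurableSet_uIoc] with x hx
      rw [uIoc_of_le hxb1.le] at hx
      simp only [hp x, if_neg (not_le.mpr hx.1)]
  have hsplit : ∫ x in (0:ℝ)..1, p x = (∫ x in (0:ℝ)..xb, p x) + ∫ x in xb..(1:ℝ), p x :=
    (intervalIntegral.integral_add_adjacent_intervals hI1 hI2).symm
  rw [hsplit, h1, h2, hq, hr]
  have he1 : exp (1 - xb + α * xb) = exp (1 - xb) * exp (α * xb) := by
    rw [← Real.exp_add]
  have he2 : exp (-α * xb) = (exp (α * xb))⁻¹ := by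
    rw [neg_mul, Real.exp_neg]
  have he3 : exp (-1 * xb) = exp (1 - xb) / exp 1 := by
    rw [eq_div_iff (Real.exp_ne_zero 1), ← Real.exp_add]
    congr 1; ring
  have he4 : exp (-1 * 1) = (exp 1)⁻¹ := by
    rw [← Real.exp_neg]; norm_num
  have hne1 : lam / Lam + exp (1 - xb) ≠ 0 := by positivity
  rw [he1, he2, he3, he4]
  field_simp
  simp only [mul_zero, neg_zero, Real.exp_zero]
  ring
end

section
/- Let Φ : [0,1] → ℝ be bounded, continuous on (0,1], and differentiable on (0,1), with possibly Φ(0) ≠ lim_{x→0+} Φ(x) =: Φ(+0). Then for x ∈ (0,1), d/dx ∫_0^1 Φ(max(x - z, 0)) dz = Φ(x) - Φ(0). -/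
open Real Set

theorem deriv_integral_max (Φ : ℝ → ℝ) (Φp0 : ℝ)
    (hbdd : ∃ M : ℝ, ∀ x ∈ Icc (0:ℝ) 1, |Φ x| ≤ M)
    (hcont : ContinuousOn Φ (Ioc (0:ℝ) 1))
    (hdiff : DifferentiableOn ℝ Φ (Ioo (0:ℝ) 1))
    (hlim : Filter.Tendsto Φ (nhdsWithin 0 (Ioi (0:ℝ))) (nhds Φp0)) :
    ∀ x ∈ Ioo (0:ℝ) 1,
      HasDerivAt (fun x' => ∫ z in (0:ℝ)..1, Φ (max (x' - z) 0)) (Φ x - Φ 0) x := by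
  obtain ⟨M, hM⟩ := hbdd
  -- integrability of Φ on 0..t for 0 ≤ t ≤ 1
  have hint : ∀ t : ℝ, 0 ≤ t → t ≤ 1 → IntervalIntegrable Φ MeasureTheory.volume 0 t := by
    intro t ht0 ht1
    rw [intervalIntegrable_iff_integrableOn_Ioc_of_le ht0]
    refine ⟨(hcont.mono (Ioc_subset_Ioc_right ht1)).aestronglyMeasurable measurableSet_Ioc, ?_⟩
    apply MeasureTheory.HasFiniteIntegral.restrict_of_bounded (C := M)
    · simp [Real.volume_Ioc]
    · filter_upwards [MeasureTheory.ae_restrict_mem measurableSet_Ioc] with z hz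
      exact hM z ⟨le_of_lt hz.1, hz.2.trans ht1⟩
  intro x hx
  obtain ⟨hx0, hx1⟩ := hx
  -- the nicer representation
  have key : ∀ x' ∈ Ioo (0:ℝ) 1,
      (∫ z in (0:ℝ)..1, Φ (max (x' - z) 0))
        = (∫ u in (0:ℝ)..x', Φ u) + (1 - x') * Φ 0 := by
    intro x' hx'
    have h1 : IntervalIntegrable (fun z => Φ (max (x' - z) 0)) MeasureTheory.volume 0 x' := by
      have := (hint x' hx'.1.le hx'.2.le).comp_sub_left x'
      simp only [sub_zero, sub_self] at this
      apply this.symm.congr_ae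
      filter_upwards [MeasureTheory.ae_restrict_mem measurableSet_uIoc] with z hz
      rw [Set.uIoc_of_le hx'.1.le] at hz
      rw [max_eq_left (by linarith [hz.1, hz.2])]
    have h2 : IntervalIntegrable (fun z => Φ (max (x' - z) 0)) MeasureTheory.volume x' 1 := by
      apply (intervalIntegrable_const (c := Φ 0)).congr_ae
      filter_upwards [MeasureTheory.ae_restrict_mem measurableSet_uIoc] with z hz
      rw [Set.uIoc_of_le hx'.2.le] at hz
      rw [max_eq_right (by linarith [hz.1, hz.2])]
    rw [← intervalIntegral.integral_add_adjacent_intervals h1 h2]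
    congr 1
    · rw [show (∫ u in (0:ℝ)..x', Φ u) = ∫ z in (0:ℝ)..x', Φ (x' - z) by
        rw [intervalIntegral.integral_comp_sub_left Φ x']; simp]
      apply intervalIntegral.integral_congr
      intro z hz
      rw [Set.uIcc_of_le hx'.1.le] at hz
      simp only [max_eq_left (by linarith [hz.1, hz.2] : (0:ℝ) ≤ x' - z)]
    · rw [show (1 - x') * Φ 0 = ∫ z in x'..(1:ℝ), Φ 0 by simp [mul_comm]]
      apply intervalIntegral.integral_congr
      intro z hz
      rw [Set.uIcc_of_le hx'.2.le] at hz
      simp [max_eq_right (by linarith [hz.1, hz.2] : x' - z ≤ 0)]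
  -- derivative of nicer function
  have hcx : ContinuousAt Φ x := hcont.continuousAt (Ioc_mem_nhds hx0 hx1)
  have hmeas : StronglyMeasurableAtFilter Φ (nhds x) :=
    ((hcont.mono Ioo_subset_Ioc_self).stronglyMeasurableAtFilter isOpen_Ioo) x ⟨hx0, hx1⟩
  have hd1 : HasDerivAt (fun x' => ∫ u in (0:ℝ)..x', Φ u) (Φ x) x :=
    intervalIntegral.integral_hasDerivAt_right (hint x hx0.le hx1.le) hmeas hcx
  have hd2 : HasDerivAt (fun x' => (1 - x') * Φ 0) (-Φ 0) x := by
    have : HasDerivAt (fun x' : ℝ => 1 - x') (-1) x := by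
      simpa using (hasDerivAt_id x).const_sub 1
    simpa using this.mul_const (Φ 0)
  have hd : HasDerivAt (fun x' => (∫ u in (0:ℝ)..x', Φ u) + (1 - x') * Φ 0)
      (Φ x - Φ 0) x := by
    simpa [sub_eq_add_neg, Pi.add_def] using hd1.add hd2
  apply hd.congr_of_eventuallyEq
  filter_upwards [isOpen_Ioo.mem_nhds (⟨hx0, hx1⟩ : x ∈ Ioo (0:ℝ) 1)] with x' hx'
  exact key x' hx'
end
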